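/- (Well-posedness of the meta algorithm.) Let ε > 0, α > 0, and let (h_t)_{t≥1} be a positive nondecreasing real sequence; for each t let k_t > 0 and z_t > k_t·h_t. Let (l_t)_{t≥1} be a real sequence with |l_t| ≤ h_t for all t. Define recursively S̃_0 = 0, Ṽ_0 = 0, and for t ≥ 1: ỹ_t = D_t(Ṽ_{t−1}, S̃_{t−1}) where D_t(V, S) = ε·erfi(S/√(4·α·(V + z_t + k_t·S))) − (ε·k_t·√α/(2·√(V + z_t + k_t·S)))·exp(S²/(4·α·(V + z_t + k_t·S))); y_t = max(ỹ_t, 0); l̃_t = l_t if l_t·ỹ_t ≥ l_t·y_t and l̃_t = 0 otherwise; S̃_t = S̃_{t−1} − l̃_t; Ṽ_t = Ṽ_{t−1} + l̃_t². Then for every t ≥ 1, ∑_{i=1}^t l̃_i ≤ h_t, i.e., S̃_t ≥ −h_t; in particular Ṽ_{t−1} + z_t + k_t·S̃_{t−1} > 0 for every t ≥ 1, so every D_t above is evaluated where it is well defined. -/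

import Mathlib

/-- The imaginary error function, `erfi x = ∫ u in 0..x, exp (u²)`
(the conventional erfi scaled by `√π / 2`). -/
noncomputable def erfi (x : ℝ) : ℝ := ∫ u in (0:ℝ)..x, Real.exp (u ^ 2)

/-- `D(V, S)`, the partial derivative in `S` of the shifted potential
`Φ(V, S) = φ(V + z + k·S, S)`. -/
noncomputable def Dfun (ε α k z V S : ℝ) : ℝ :=
  ε * erfi (S / Real.sqrt (4 * α * (V + z + k * S))) -
    ε * k * Real.sqrt α / (2 * Real.sqrt (V + z + k * S)) *
      Real.exp (S ^ 2 / (4 * α * (V + z + k * S)))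

lemma erfi_nonpos {x : ℝ} (hx : x ≤ 0) : erfi x ≤ 0 := by
  rw [erfi, intervalIntegral.integral_symm]
  simp only [neg_nonpos]
  apply intervalIntegral.integral_nonneg hx
  intro u _
  positivity

lemma Dfun_neg {ε α k z V S : ℝ} (hε : 0 < ε) (hα : 0 < α) (hk : 0 < k)
    (hx : 0 < V + z + k * S) (hS : S ≤ 0) : Dfun ε α k z V S < 0 := by
  rw [Dfun]
  have h1 : erfi (S / Real.sqrt (4 * α * (V + z + k * S))) ≤ 0 :=
    erfi_nonpos (div_nonpos_of_nonpos_of_nonneg hS (Real.sqrt_nonneg _))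
  have h3 : ε * erfi (S / Real.sqrt (4 * α * (V + z + k * S))) ≤ 0 :=
    mul_nonpos_of_nonneg_of_nonpos hε.le h1
  have hsa : 0 < Real.sqrt α := Real.sqrt_pos.mpr hα
  have hsx : 0 < Real.sqrt (V + z + k * S) := Real.sqrt_pos.mpr hx
  have h2 : 0 < ε * k * Real.sqrt α / (2 * Real.sqrt (V + z + k * S)) *
      Real.exp (S ^ 2 / (4 * α * (V + z + k * S))) := by positivity
  linarith

/-- Well-posedness of the meta algorithm: the surrogate losses `l̃` satisfy
`∑_{i=1}^t l̃_i ≤ h_t` (i.e. `S̃_t ≥ −h_t`) for all `t ≥ 1`, and consequently the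
first argument of `φ` in every prediction step is positive. -/
theorem meta_algorithm_well_posed (ε α : ℝ) (hε : 0 < ε) (hα : 0 < α)
    (h k z : ℕ → ℝ)
    (hpos : ∀ t, 1 ≤ t → 0 < h t)
    (hmono : ∀ t, 1 ≤ t → h t ≤ h (t + 1))
    (hk : ∀ t, 1 ≤ t → 0 < k t)
    (hz : ∀ t, 1 ≤ t → k t * h t < z t)
    (l : ℕ → ℝ) (hl : ∀ t, 1 ≤ t → |l t| ≤ h t)
    (Stil Vtil ytil y ltil : ℕ → ℝ)
    (hS0 : Stil 0 = 0) (hV0 : Vtil 0 = 0)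
    (hytil : ∀ t, 1 ≤ t → ytil t = Dfun ε α (k t) (z t) (Vtil (t - 1)) (Stil (t - 1)))
    (hy : ∀ t, 1 ≤ t → y t = max (ytil t) 0)
    (hltil : ∀ t, 1 ≤ t →
      ltil t = if l t * ytil t ≥ l t * y t then l t else 0)
    (hSrec : ∀ t, 1 ≤ t → Stil t = Stil (t - 1) - ltil t)
    (hVrec : ∀ t, 1 ≤ t → Vtil t = Vtil (t - 1) + (ltil t) ^ 2) :
    ∀ t, 1 ≤ t →
      (∑ i ∈ Finset.Icc 1 t, ltil i) ≤ h t ∧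
      -h t ≤ Stil t ∧
      0 < Vtil (t - 1) + z t + k t * Stil (t - 1) := by
  -- invariant
  set P : ℕ → Prop :=
    fun n => 0 ≤ Vtil n ∧ (0 ≤ Stil n ∨ (1 ≤ n ∧ -h n ≤ Stil n)) with hPdef
  -- lower bound on Stil n against h (n+1)
  have hSlb : ∀ n, P n → -h (n + 1) ≤ Stil n := by
    intro n hPn
    rcases hPn.2 with hS | ⟨hn1, hS⟩
    · have := hpos (n + 1) (by omega); linarith
    · have := hmono n hn1; linarith
  -- positivity of the argument
  have hpos' : ∀ n, P n → 0 < Vtil n + z (n + 1) + k (n + 1) * Stil n := by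
    intro n hPn
    have hk' := hk (n + 1) (by omega)
    have hz' := hz (n + 1) (by omega)
    have hS := hSlb n hPn
    nlinarith [hPn.1, mul_le_mul_of_nonneg_left hS hk'.le]
  -- induction step
  have hstep : ∀ n, P n → P (n + 1) := by
    intro n hPn
    have hk' := hk (n + 1) (by omega)
    have hx := hpos' n hPn
    have hV1 : 0 ≤ Vtil (n + 1) := by
      rw [hVrec (n + 1) (by omega)]
      simp only [Nat.add_sub_cancel]
      nlinarith [hPn.1, sq_nonneg (ltil (n + 1))]
    have habs : |ltil (n + 1)| ≤ h (n + 1) := by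
      rw [hltil (n + 1) (by omega)]
      split_ifs with hc
      · exact hl (n + 1) (by omega)
      · simpa using (hpos (n + 1) (by omega)).le
    have hSrec' : Stil (n + 1) = Stil n - ltil (n + 1) := by
      have := hSrec (n + 1) (by omega)
      simpa using this
    have key : ltil (n + 1) ≤ 0 ∨ 0 < Stil n := by
      by_contra hc
      push_neg at hc
      obtain ⟨hl1, hSn⟩ := hc
      have hyt : ytil (n + 1) = Dfun ε α (k (n + 1)) (z (n + 1)) (Vtil n) (Stil n) := by
        have := hytil (n + 1) (by omega)
        simpa using this
      have hDneg : ytil (n + 1) < 0 := by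
        rw [hyt]; exact Dfun_neg hε hα hk' hx hSn
      have hyv : y (n + 1) = max (ytil (n + 1)) 0 := hy (n + 1) (by omega)
      have hyv0 : 0 ≤ y (n + 1) := by rw [hyv]; exact le_max_right _ _
      have hlt := hltil (n + 1) (by omega)
      rw [hlt] at hl1
      split_ifs at hl1 with hcond
      · -- hcond : l (n+1) * ytil (n+1) ≥ l (n+1) * y (n+1), hl1 : 0 < l (n+1)
        nlinarith [mul_pos hl1 (neg_pos.mpr hDneg), mul_nonneg hl1.le hyv0]
      · exact lt_irrefl 0 hl1
    refine ⟨hV1, Or.inr ⟨by omega, ?_⟩⟩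
    rcases key with hl0 | hSn
    · have := hSlb n hPn; rw [hSrec']; linarith
    · have h1 : ltil (n + 1) ≤ h (n + 1) := (abs_le.mp habs).2
      rw [hSrec']; linarith
  have hP : ∀ n, P n := by
    intro n
    induction n with
    | zero => exact ⟨by rw [hV0], Or.inl (by rw [hS0])⟩
    | succ m ih => exact hstep m ih
  have hsum : ∀ n, Stil n = -∑ i ∈ Finset.Icc 1 n, ltil i := by
    intro n
    induction n with
    | zero => simp [hS0]
    | succ m ih =>
      have := hSrec (m + 1) (by omega)
      simp only [Nat.add_sub_cancel] at this
      rw [this, ih, Finset.sum_Icc_succ_top (by omega : 1 ≤ m + 1)]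
      ring
  intro t ht
  obtain ⟨n, rfl⟩ : ∃ n, t = n + 1 := ⟨t - 1, by omega⟩
  have hPt := hP (n + 1)
  have hSt : -h (n + 1) ≤ Stil (n + 1) := by
    rcases hPt.2 with hS | ⟨_, hS⟩
    · have := hpos (n + 1) (by omega); linarith
    · exact hS
  refine ⟨?_, hSt, ?_⟩
  · have := hsum (n + 1); linarith
  · simpa using hpos' n (hP n)
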